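/- Under Assumption A, for every probability measure μ on Θ with finite second moment, G(μ)² ≤ 2β (R² + 1) S₀² · L(μ) · (1 + m₂(μ)). -/

import Mathlib

open MeasureTheory Set Filter
open scoped ENNReal

noncomputable section

/-- The parameter space `Θ := ℝ × ℝ^d × ℝ` of a one-hidden-layer network,
with coordinates `θ = (w, a, b)`. -/
abbrev Theta (d : ℕ) : Type := ℝ × EuclideanSpace ℝ (Fin d) × ℝ

/-- Second moment `m₂(μ) = ∫ ‖θ‖² dμ(θ)`. -/
def m2 {d : ℕ} (μ : Measure (Theta d)) : ℝ := ∫ θ : Theta d, ‖θ‖ ^ 2 ∂μ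

/-- `μ` is a probability measure with finite second moment. -/
def MemP2 {d : ℕ} (μ : Measure (Theta d)) : Prop :=
  IsProbabilityMeasure μ ∧ Integrable (fun θ : Theta d => ‖θ‖ ^ 2) μ

/-- Mean-field network output `f_μ(x) = ∫ w σ(a·x + b) dμ(w,a,b)`. -/
def netOut {d : ℕ} (σ : ℝ → ℝ) (μ : Measure (Theta d))
    (x : EuclideanSpace ℝ (Fin d)) : ℝ :=
  ∫ θ : Theta d, θ.1 * σ ((inner ℝ θ.2.1 x : ℝ) + θ.2.2) ∂μ

/-- Empirical loss `L(μ) = (1/M) Σ_k L̃(f_μ(x_k) − y_k)`. -/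
def lossL {d M : ℕ} (σ Ltil : ℝ → ℝ) (x : Fin M → EuclideanSpace ℝ (Fin d))
    (y : Fin M → ℝ) (μ : Measure (Theta d)) : ℝ :=
  (1 / (M : ℝ)) * ∑ k : Fin M, Ltil (netOut σ μ (x k) - y k)

/-- The feature gradient vector
`v_k(w,a,b) = (σ(a·x_k+b), w σ'(a·x_k+b) x_k, w σ'(a·x_k+b)) ∈ Θ`. -/
def vfeat {d : ℕ} (σ σ' : ℝ → ℝ) (x : EuclideanSpace ℝ (Fin d)) (θ : Theta d) : Theta d :=
  (σ ((inner ℝ θ.2.1 x : ℝ) + θ.2.2),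
   (θ.1 * σ' ((inner ℝ θ.2.1 x : ℝ) + θ.2.2)) • x,
   θ.1 * σ' ((inner ℝ θ.2.1 x : ℝ) + θ.2.2))

/-- The squared slope functional
`G(μ)² = ∫ ‖(1/M) Σ_k L̃'(f_μ(x_k) − y_k) v_k(θ)‖² dμ(θ)`. -/
def slopeSq {d M : ℕ} (σ σ' Ltil' : ℝ → ℝ) (x : Fin M → EuclideanSpace ℝ (Fin d))
    (y : Fin M → ℝ) (μ : Measure (Theta d)) : ℝ :=
  ∫ θ : Theta d,
    ‖(1 / (M : ℝ)) •
        ∑ k : Fin M, Ltil' (netOut σ μ (x k) - y k) • vfeat σ σ' (x k) θ‖ ^ 2 ∂μ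

/-- The slope functional `G(μ) = √(G(μ)²) ≥ 0`. -/
def slopeG {d M : ℕ} (σ σ' Ltil' : ℝ → ℝ) (x : Fin M → EuclideanSpace ℝ (Fin d))
    (y : Fin M → ℝ) (μ : Measure (Theta d)) : ℝ :=
  Real.sqrt (slopeSq σ σ' Ltil' x y μ)

/-- Squared Wasserstein-2 distance, as the infimum over couplings of the (possibly infinite)
integral `∫ ‖p.1 − p.2‖² dπ`. -/
def W2sq {d : ℕ} (μ ν : Measure (Theta d)) : ℝ≥0∞ :=
  ⨅ (π : Measure (Theta d × Theta d))
    (_ : π.map Prod.fst = μ ∧ π.map Prod.snd = ν),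
      ∫⁻ p, ENNReal.ofReal (‖p.1 - p.2‖ ^ 2) ∂π

/-- Wasserstein-2 distance. -/
def W2 {d : ℕ} (μ ν : Measure (Theta d)) : ℝ := Real.sqrt (W2sq μ ν).toReal

open intervalIntegral in

lemma taylor_upper (Ltil Ltil' : ℝ → ℝ) (β : ℝ)
    (hd : ∀ r, HasDerivAt Ltil (Ltil' r) r) (hc : Continuous Ltil')
    (hlip : ∀ r s, |Ltil' r - Ltil' s| ≤ β * |r - s|) (a b : ℝ) :
    Ltil b ≤ Ltil a + Ltil' a * (b - a) + β / 2 * (b - a) ^ 2 := by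
  have hint : ∀ u v : ℝ, IntervalIntegrable Ltil' volume u v :=
    fun u v => hc.intervalIntegrable u v
  have hftc : ∀ u v : ℝ, (∫ t in u..v, Ltil' t) = Ltil v - Ltil u := fun u v =>
    integral_eq_sub_of_hasDerivAt (fun t _ => hd t) (hint u v)
  rcases le_total a b with hab | hab
  · have h1 : (∫ t in a..b, (Ltil' t - Ltil' a)) ≤ ∫ t in a..b, β * (t - a) := by
      apply integral_mono_on hab ((hint a b).sub intervalIntegrable_const)
        ((continuous_const.mul (continuous_id.sub continuous_const)).intervalIntegrable a b)
      intro t ht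
      have h2 : Ltil' t - Ltil' a ≤ β * |t - a| := (le_abs_self _).trans (hlip t a)
      rwa [abs_of_nonneg (by linarith [ht.1] : (0:ℝ) ≤ t - a)] at h2
    have h3 : (∫ t in a..b, (Ltil' t - Ltil' a)) = Ltil b - Ltil a - Ltil' a * (b - a) := by
      rw [intervalIntegral.integral_sub (hint a b) intervalIntegrable_const,
        hftc, intervalIntegral.integral_const]
      ring_nf
    have h4 : (∫ t in a..b, β * (t - a)) = β / 2 * (b - a) ^ 2 := by
      rw [intervalIntegral.integral_const_mul]
      have : (∫ t in a..b, (t - a)) = (b - a) ^ 2 / 2 := by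
        rw [intervalIntegral.integral_comp_sub_right (fun u => u) a, integral_id]
        ring
      rw [this]; ring
    rw [h3, h4] at h1; linarith
  · have h1 : (∫ t in b..a, (Ltil' a - Ltil' t)) ≤ ∫ t in b..a, β * (a - t) := by
      apply integral_mono_on hab (intervalIntegrable_const.sub (hint b a))
        ((continuous_const.mul (continuous_const.sub continuous_id)).intervalIntegrable b a)
      intro t ht
      have h2 : Ltil' a - Ltil' t ≤ β * |a - t| := (le_abs_self _).trans (hlip a t)
      rwa [abs_of_nonneg (by linarith [ht.2] : (0:ℝ) ≤ a - t)] at h2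
    have h3 : (∫ t in b..a, (Ltil' a - Ltil' t)) = Ltil' a * (a - b) - (Ltil a - Ltil b) := by
      rw [intervalIntegral.integral_sub intervalIntegrable_const (hint b a),
        hftc, intervalIntegral.integral_const]
      rw [smul_eq_mul]; ring
    have h4 : (∫ t in b..a, β * (a - t)) = β / 2 * (b - a) ^ 2 := by
      rw [intervalIntegral.integral_const_mul]
      have : (∫ t in b..a, (a - t)) = (a - b) ^ 2 / 2 := by
        rw [intervalIntegral.integral_comp_sub_left (fun u => u) a, integral_id]
        ring
      rw [this]; ring
    rw [h3, h4] at h1; linarith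

lemma deriv_sq_le (Ltil Ltil' : ℝ → ℝ) (β : ℝ) (hβ : 0 < β)
    (hd : ∀ r, HasDerivAt Ltil (Ltil' r) r) (hc : Continuous Ltil')
    (hlip : ∀ r s, |Ltil' r - Ltil' s| ≤ β * |r - s|)
    (hnn : ∀ r, 0 ≤ Ltil r) (r : ℝ) :
    (Ltil' r) ^ 2 ≤ 2 * β * Ltil r := by
  have h := taylor_upper Ltil Ltil' β hd hc hlip r (r - Ltil' r / β)
  have h0 := hnn (r - Ltil' r / β)
  have hb : (r - Ltil' r / β - r) = -(Ltil' r / β) := by ring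
  rw [hb] at h
  have hβ' : β ≠ 0 := hβ.ne'
  have : Ltil r - (Ltil' r) ^ 2 / (2 * β) ≥ 0 := by
    have : Ltil' r * -(Ltil' r / β) + β / 2 * (-(Ltil' r / β)) ^ 2
        = -((Ltil' r) ^ 2 / (2 * β)) := by field_simp; ring
    nlinarith [h, h0]
  have h2β : 0 < 2 * β := by linarith
  have key : 2 * β * Ltil r - (Ltil' r) ^ 2 = 2 * β * (Ltil r - (Ltil' r) ^ 2 / (2 * β)) := by
    field_simp
  have := mul_nonneg h2β.le this
  linarith

set_option maxHeartbeats 1600000 in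
/-- (Growth bound for the slope, Lemma 4.2, first part.) Under Assumption A
(`σ` continuously differentiable with `|σ| ≤ S₀`, `|σ'| ≤ S₀`; `‖x_k‖ ≤ R`; `L̃ ≥ 0`
continuously differentiable with `β`-Lipschitz derivative and infimum `0`), for every
probability measure `μ` on `Θ` with finite second moment,
`G(μ)² ≤ 2β(R² + 1)S₀² · L(μ) · (1 + m₂(μ))`. -/
theorem slopeSq_growth_bound
    {d M : ℕ} (hM : 1 ≤ M)
    (σ σ' Ltil Ltil' : ℝ → ℝ) (S₀ β R : ℝ) (hβ : 0 < β)
    (x : Fin M → EuclideanSpace ℝ (Fin d)) (y : Fin M → ℝ)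
    (hσderiv : ∀ z : ℝ, HasDerivAt σ (σ' z) z)
    (hσ'cont : Continuous σ')
    (hσbd : ∀ z : ℝ, |σ z| ≤ S₀) (hσ'bd : ∀ z : ℝ, |σ' z| ≤ S₀)
    (hR : ∀ k : Fin M, ‖x k‖ ≤ R)
    (hLnonneg : ∀ r : ℝ, 0 ≤ Ltil r)
    (hLderiv : ∀ r : ℝ, HasDerivAt Ltil (Ltil' r) r)
    (hL'cont : Continuous Ltil')
    (hLlip : ∀ r s : ℝ, |Ltil' r - Ltil' s| ≤ β * |r - s|)
    (hLinf : ∀ ε : ℝ, 0 < ε → ∃ r : ℝ, Ltil r < ε)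
    (μ : Measure (Theta d)) (hμ : IsProbabilityMeasure μ)
    (hμ2 : Integrable (fun θ : Theta d => ‖θ‖ ^ 2) μ) :
    slopeSq σ σ' Ltil' x y μ ≤
      2 * β * (R ^ 2 + 1) * S₀ ^ 2 * lossL σ Ltil x y μ * (1 + m2 μ) := by
  have hS0 : 0 ≤ S₀ := (abs_nonneg _).trans (hσbd 0)
  have hR0 : 0 ≤ R := (norm_nonneg _).trans (hR ⟨0, hM⟩)
  have hMpos : (0:ℝ) < (M:ℝ) := by exact_mod_cast hM
  set e : Fin M → ℝ := fun k => netOut σ μ (x k) - y k with he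
  set c : Fin M → ℝ := fun k => Ltil' (e k) with hcdef
  -- bound on feature vectors
  have hv : ∀ (k : Fin M) (θ : Theta d),
      ‖vfeat σ σ' (x k) θ‖ ^ 2 ≤ S₀ ^ 2 * (R ^ 2 + 1) * (1 + ‖θ‖ ^ 2) := by
    intro k θ
    set z := (inner ℝ θ.2.1 (x k) : ℝ) + θ.2.2 with hz
    have hw : |θ.1| ≤ ‖θ‖ := norm_fst_le θ
    have hx := hR k
    have hσ1 := hσbd z
    have hσ2 := hσ'bd z
    have hnθ : (0:ℝ) ≤ ‖θ‖ := norm_nonneg θ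
    have hnx : (0:ℝ) ≤ ‖x k‖ := norm_nonneg _
    have hmax : ∀ a b D : ℝ, a ^ 2 ≤ D → b ^ 2 ≤ D → (a ⊔ b) ^ 2 ≤ D := by
      intro a b D ha hb
      rcases max_choice a b with h | h <;> rw [h] <;> assumption
    have hu : |θ.1| * |σ' z| ≤ ‖θ‖ * S₀ := mul_le_mul hw hσ2 (abs_nonneg _) hnθ
    have hu0 : (0:ℝ) ≤ |θ.1| * |σ' z| := by positivity
    have hB : (|θ.1 * σ' z| * ‖x k‖) ^ 2 ≤ S₀ ^ 2 * (R ^ 2 + 1) * (1 + ‖θ‖ ^ 2) := by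
      rw [abs_mul]
      have h1 : |θ.1| * |σ' z| * ‖x k‖ ≤ ‖θ‖ * S₀ * R := mul_le_mul hu hx hnx (by positivity)
      have h2 := pow_le_pow_left₀ (by positivity : (0:ℝ) ≤ |θ.1| * |σ' z| * ‖x k‖) h1 2
      nlinarith [sq_nonneg S₀, sq_nonneg (S₀ * ‖θ‖), sq_nonneg (S₀ * R)]
    have hC : (|θ.1 * σ' z|) ^ 2 ≤ S₀ ^ 2 * (R ^ 2 + 1) * (1 + ‖θ‖ ^ 2) := by
      rw [abs_mul]
      have h2 := pow_le_pow_left₀ hu0 hu 2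
      nlinarith [sq_nonneg S₀, sq_nonneg (S₀ * R), sq_nonneg (S₀ * R * ‖θ‖)]
    have hA : (|σ z|) ^ 2 ≤ S₀ ^ 2 * (R ^ 2 + 1) * (1 + ‖θ‖ ^ 2) := by
      have h2 := pow_le_pow_left₀ (abs_nonneg (σ z)) hσ1 2
      nlinarith [sq_nonneg (S₀ * R), sq_nonneg (S₀ * ‖θ‖), sq_nonneg (S₀ * R * ‖θ‖)]
    rw [vfeat, Prod.norm_def, Prod.norm_def]
    simp only [Real.norm_eq_abs, norm_smul]
    apply hmax _ _ _ hA
    apply hmax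
    · simpa [Real.norm_eq_abs] using hB
    · exact hC
  have hderivsq : ∀ r : ℝ, (Ltil' r) ^ 2 ≤ 2 * β * Ltil r :=
    deriv_sq_le Ltil Ltil' β hβ hLderiv hL'cont hLlip hLnonneg
  set K : ℝ := 2 * β * (R ^ 2 + 1) * S₀ ^ 2 * lossL σ Ltil x y μ with hK
  -- pointwise bound
  have hpt : ∀ θ : Theta d,
      ‖(1 / (M : ℝ)) • ∑ k : Fin M, c k • vfeat σ σ' (x k) θ‖ ^ 2
        ≤ K * (1 + ‖θ‖ ^ 2) := by
    intro θ
    set B : ℝ := S₀ ^ 2 * (R ^ 2 + 1) * (1 + ‖θ‖ ^ 2) with hBdef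
    have hBnn : 0 ≤ B := by positivity
    have h1 : ‖(1 / (M : ℝ)) • ∑ k : Fin M, c k • vfeat σ σ' (x k) θ‖
        ≤ (1 / (M:ℝ)) * ∑ k : Fin M, |c k| * ‖vfeat σ σ' (x k) θ‖ := by
      rw [norm_smul, Real.norm_eq_abs, abs_of_nonneg (by positivity : (0:ℝ) ≤ 1/(M:ℝ))]
      apply mul_le_mul_of_nonneg_left _ (by positivity)
      refine (norm_sum_le _ _).trans_eq ?_
      exact Finset.sum_congr rfl fun k _ => by rw [norm_smul, Real.norm_eq_abs]
    have h2 : ‖(1 / (M : ℝ)) • ∑ k : Fin M, c k • vfeat σ σ' (x k) θ‖ ^ 2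
        ≤ ((1 / (M:ℝ)) * ∑ k : Fin M, |c k| * ‖vfeat σ σ' (x k) θ‖) ^ 2 :=
      pow_le_pow_left₀ (norm_nonneg _) h1 2
    have hCS : (∑ k : Fin M, |c k| * ‖vfeat σ σ' (x k) θ‖) ^ 2
        ≤ (M:ℝ) * ∑ k : Fin M, (|c k| * ‖vfeat σ σ' (x k) θ‖) ^ 2 := by
      have := sq_sum_le_card_mul_sum_sq (s := (Finset.univ : Finset (Fin M)))
        (f := fun k => |c k| * ‖vfeat σ σ' (x k) θ‖)
      simpa using this
    have hterm : ∀ k : Fin M, (|c k| * ‖vfeat σ σ' (x k) θ‖) ^ 2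
        ≤ (2 * β * Ltil (e k)) * B := by
      intro k
      rw [mul_pow, sq_abs]
      exact mul_le_mul (hderivsq (e k)) (hv k θ) (sq_nonneg _)
        (by nlinarith [hLnonneg (e k)])
    have hsum : (∑ k : Fin M, (|c k| * ‖vfeat σ σ' (x k) θ‖) ^ 2)
        ≤ (2 * β * B) * ∑ k : Fin M, Ltil (e k) := by
      rw [Finset.mul_sum]
      exact Finset.sum_le_sum fun k _ => (hterm k).trans_eq (by ring)
    have hfin : (1 / (M:ℝ)) ^ 2 * ((M:ℝ) * ((2 * β * B) * ∑ k : Fin M, Ltil (e k)))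
        = K * (1 + ‖θ‖ ^ 2) := by
      rw [hK, lossL, hBdef]
      field_simp
      ring
    calc ‖(1 / (M : ℝ)) • ∑ k : Fin M, c k • vfeat σ σ' (x k) θ‖ ^ 2
        ≤ ((1 / (M:ℝ)) * ∑ k : Fin M, |c k| * ‖vfeat σ σ' (x k) θ‖) ^ 2 := h2
      _ = (1 / (M:ℝ)) ^ 2 * (∑ k : Fin M, |c k| * ‖vfeat σ σ' (x k) θ‖) ^ 2 := by ring
      _ ≤ (1 / (M:ℝ)) ^ 2 * ((M:ℝ) * ∑ k : Fin M, (|c k| * ‖vfeat σ σ' (x k) θ‖) ^ 2) := by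
          apply mul_le_mul_of_nonneg_left hCS (by positivity)
      _ ≤ (1 / (M:ℝ)) ^ 2 * ((M:ℝ) * ((2 * β * B) * ∑ k : Fin M, Ltil (e k))) := by
          apply mul_le_mul_of_nonneg_left (mul_le_mul_of_nonneg_left hsum hMpos.le) (by positivity)
      _ = K * (1 + ‖θ‖ ^ 2) := hfin
  -- integrate
  have hKnn : 0 ≤ K := by
    have hlnn : 0 ≤ lossL σ Ltil x y μ := by
      rw [lossL]
      exact mul_nonneg (by positivity) (Finset.sum_nonneg fun k _ => hLnonneg _)
    rw [hK]; positivity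
  have hint : Integrable (fun θ : Theta d => K * (1 + ‖θ‖ ^ 2)) μ :=
    ((integrable_const (1:ℝ)).add hμ2).const_mul K
  have hmono : slopeSq σ σ' Ltil' x y μ ≤ ∫ θ : Theta d, K * (1 + ‖θ‖ ^ 2) ∂μ := by
    rw [slopeSq]
    exact integral_mono_of_nonneg (Filter.Eventually.of_forall fun θ => by positivity)
      hint (Filter.Eventually.of_forall hpt)
  have hval : (∫ θ : Theta d, K * (1 + ‖θ‖ ^ 2) ∂μ) = K * (1 + m2 μ) := by
    rw [integral_const_mul, integral_add (integrable_const 1) hμ2, integral_const,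
      probReal_univ, m2]
    simp
  rw [hval] at hmono
  refine hmono.trans_eq ?_
  rw [hK]
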